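/- For a deterministic program P : G × U → D, with G uniformly distributed on the finite set 𝒢 and U uniformly distributed on the finite set 𝒰, and G, U independent, the conditional vulnerability equals |{(u,d) ∈ 𝒰 × 𝒟 : ∃ g ∈ 𝒢, P(g,u) = d}| / (|𝒰| · |𝒢|). -/

import Mathlib

open Finset
open scoped Classical

/-- Conditional vulnerability
`V(G ∣ P(G,U), U) = Σ_u Σ_d max_g Pr[P(G,U)=d, U=u] · Pr[G=g ∣ P(G,U)=d, U=u]`
for independent `G ~ pG`, `U ~ pU` (zero-probability terms count as 0, via `x/0 = 0`). -/
noncomputable def vuln {𝒢 𝒰 𝒟 : Type*} [Fintype 𝒢] [Fintype 𝒰] [Fintype 𝒟] [Nonempty 𝒢]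
    (pG : 𝒢 → ℝ) (pU : 𝒰 → ℝ) (P : 𝒢 × 𝒰 → 𝒟) : ℝ :=
  ∑ u, ∑ d,
    Finset.univ.sup' Finset.univ_nonempty fun g =>
      (∑ g', if P (g', u) = d then pG g' * pU u else 0) *
        ((if P (g, u) = d then pG g * pU u else 0) /
          (∑ g', if P (g', u) = d then pG g' * pU u else 0))

/-- Computation of conditional vulnerability through counting, for uniform
independent `G` and `U`. -/
theorem stmt5 {𝒢 𝒰 𝒟 : Type*} [Fintype 𝒢] [Fintype 𝒰] [Fintype 𝒟] [Nonempty 𝒢] [Nonempty 𝒰]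
    (P : 𝒢 × 𝒰 → 𝒟) :
    vuln (fun _ => (1 : ℝ) / Fintype.card 𝒢) (fun _ => (1 : ℝ) / Fintype.card 𝒰) P =
      ((Finset.univ.filter fun ud : 𝒰 × 𝒟 => ∃ g, P (g, ud.1) = ud.2).card : ℝ) /
        (Fintype.card 𝒰 * Fintype.card 𝒢) := by
  classical
  have hG : (0:ℝ) < Fintype.card 𝒢 := by exact_mod_cast Fintype.card_pos
  have hU : (0:ℝ) < Fintype.card 𝒰 := by exact_mod_cast Fintype.card_pos
  set c : ℝ := (1 : ℝ) / Fintype.card 𝒢 * ((1 : ℝ) / Fintype.card 𝒰) with hc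
  have hcpos : 0 < c := by positivity
  have key : ∀ (u : 𝒰) (d : 𝒟),
      (Finset.univ.sup' Finset.univ_nonempty fun g =>
        (∑ g', if P (g', u) = d then c else 0) *
          ((if P (g, u) = d then c else 0) /
            (∑ g', if P (g', u) = d then c else 0)))
      = if ∃ g, P (g, u) = d then c else 0 := by
    intro u d
    set S : ℝ := ∑ g', if P (g', u) = d then c else 0 with hS
    by_cases h : ∃ g, P (g, u) = d
    · obtain ⟨g0, hg0⟩ := h
      have hSpos : 0 < S := by
        apply Finset.sum_pos'
        · intro i _; split <;> simp [hcpos.le]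
        · exact ⟨g0, Finset.mem_univ _, by simp [hg0, hcpos]⟩
      rw [if_pos ⟨g0, hg0⟩]
      apply le_antisymm
      · apply Finset.sup'_le
        intro g _
        split
        · rw [mul_div_cancel₀ _ hSpos.ne']
        · simpa using hcpos.le
      · have := Finset.le_sup' (f := fun g =>
          S * ((if P (g, u) = d then c else 0) / S)) (Finset.mem_univ g0)
        exact le_trans (le_of_eq (by simp only [hg0, ↓reduceIte]; rw [mul_div_cancel₀ _ hSpos.ne'])) this
    · have hz : ∀ g : 𝒢, ¬ P (g, u) = d := by
        intro g hg; exact h ⟨g, hg⟩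
      have : ∀ g : 𝒢, S * ((if P (g, u) = d then c else 0) / S) = 0 := by
        intro g; simp [hz g]
      rw [if_neg h]
      apply le_antisymm
      · exact Finset.sup'_le _ _ fun g _ => (this g).le
      · have h2 := Finset.le_sup' (f := fun g =>
          S * ((if P (g, u) = d then c else 0) / S)) (Finset.mem_univ (Classical.arbitrary 𝒢))
        simpa [hz] using h2
  have : vuln (fun _ => (1 : ℝ) / Fintype.card 𝒢) (fun _ => (1 : ℝ) / Fintype.card 𝒰) P
      = ∑ u, ∑ d, if ∃ g, P (g, u) = d then c else 0 := by
    unfold vuln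
    exact Finset.sum_congr rfl fun u _ => Finset.sum_congr rfl fun d _ => key u d
  rw [this, ← Finset.sum_product']
  rw [Finset.sum_ite, Finset.sum_const_zero, Finset.sum_const, add_zero, nsmul_eq_mul]
  rw [hc]
  field_simp
  rw [Finset.univ_product_univ]
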